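/- arXiv:1311.0764 — 4 statements merged into one kernel-verified Lean document; each statement's English description precedes it below -/
import Mathlib

section
/- For an orthogonal matrix U of size N×N, the entrywise 1-norm ‖U‖₁ = Σᵢⱼ |Uᵢⱼ| equals N·√N if and only if the rescaled matrix H = √N · U has all entries equal to ±1 (equivalently, H is a Hadamard matrix). -/
open Matrix

/-- For an orthogonal `N × N` matrix `U`, the entrywise 1-norm `∑ᵢⱼ |Uᵢⱼ|`
equals `N·√N` iff `H = √N·U` has all entries `±1` (i.e. `H` is Hadamard). -/
theorem stmt_1 (N : ℕ) (U : Matrix (Fin N) (Fin N) ℝ)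
    (hU : Uᵀ * U = 1) :
    (∑ i, ∑ j, |U i j|) = N * Real.sqrt N ↔
      ∀ i j, Real.sqrt N * U i j = 1 ∨ Real.sqrt N * U i j = -1 := by
  rcases Nat.eq_zero_or_pos N with h0 | hNpos
  · subst h0; simp
  have hN : (0:ℝ) < N := by exact_mod_cast hNpos
  set s := Real.sqrt N with hsdef
  have hs : 0 < s := Real.sqrt_pos.mpr hN
  have hs2 : s ^ 2 = N := Real.sq_sqrt hN.le
  have hsq : ∀ j, ∑ i, (U i j) ^ 2 = 1 := by
    intro j
    have h := congrFun (congrFun hU j) j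
    simpa [Matrix.mul_apply, Matrix.one_apply, sq] using h
  have htot : ∑ i, ∑ j, (U i j) ^ 2 = (N:ℝ) := by
    rw [Finset.sum_comm]
    simp [hsq]
  set g : Fin N → Fin N → ℝ := fun i j => (s * |U i j| - 1) ^ 2 / (2 * s) with hg
  have hgnn : ∀ i j, 0 ≤ g i j := fun i j => by positivity
  have hgsum : ∑ i, ∑ j, g i j = (N:ℝ) * s - ∑ i, ∑ j, |U i j| := by
    have : ∀ i j, g i j = (s ^ 2 * (U i j) ^ 2 + 1) / (2 * s) - |U i j| := by
      intro i j
      have habs : |U i j| ^ 2 = (U i j) ^ 2 := sq_abs _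
      simp only [hg]
      field_simp [hg]
      ring_nf
      nlinarith [habs]
    simp only [this, Finset.sum_sub_distrib]
    have hA : ∑ i, ∑ j, (s ^ 2 * (U i j) ^ 2 + 1) / (2 * s) = (N:ℝ) * s := by
      rw [show ∑ i, ∑ j, (s ^ 2 * (U i j) ^ 2 + 1) / (2 * s)
          = (∑ i, ∑ j, (s ^ 2 * (U i j) ^ 2 + 1)) / (2 * s) by
        simp [Finset.sum_div]]
      have hB : ∑ i, ∑ j, (s ^ 2 * (U i j) ^ 2 + 1) = (N:ℝ) * N + N * N := by
        simp only [Finset.sum_add_distrib, ← Finset.mul_sum, hs2]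
        rw [htot]
        simp
      rw [hB]
      field_simp
      nlinarith [hs2]
    rw [hA]
  have hgzero : ∀ i j, (g i j = 0 ↔ (s * U i j = 1 ∨ s * U i j = -1)) := by
    intro i j
    rw [hg]
    simp only
    rw [div_eq_zero_iff]
    have : ¬ (2 * s = 0) := by positivity
    simp only [this, or_false]
    rw [pow_eq_zero_iff (by norm_num), sub_eq_zero]
    have : s * |U i j| = |s * U i j| := by
      rw [abs_mul, abs_of_pos hs]
    rw [this]
    exact abs_eq (by norm_num)
  constructor
  · intro h i j
    have hz : ∑ i, ∑ j, g i j = 0 := by rw [hgsum, h]; ring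
    have h1 : ∀ i ∈ Finset.univ, (0:ℝ) ≤ ∑ j, g i j :=
      fun i _ => Finset.sum_nonneg fun j _ => hgnn i j
    have h2 := (Finset.sum_eq_zero_iff_of_nonneg h1).mp hz i (Finset.mem_univ i)
    have h3 := (Finset.sum_eq_zero_iff_of_nonneg fun j _ => hgnn i j).mp h2 j
      (Finset.mem_univ j)
    exact (hgzero i j).mp h3
  · intro h
    have hz : ∑ i, ∑ j, g i j = 0 :=
      Finset.sum_eq_zero fun i _ => Finset.sum_eq_zero fun j _ =>
        (hgzero i j).mpr (h i j)
    have := hgsum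
    rw [hz] at this
    linarith
end

section
/- Every sign matrix D ∈ M_d({±1}) appears as a submatrix of the Walsh matrix W_M with M = 2^{d + ⌈log₂ d⌉}. -/
open Matrix

/-- The Walsh matrix of size `2^n`, indexed by bit strings `x, y ∈ {0,1}^n`,
with entries `(−1)^(∑ᵢ xᵢ yᵢ)`. -/
noncomputable def walsh (n : ℕ) : Matrix (Fin n → Bool) (Fin n → Bool) ℝ :=
  Matrix.of fun x y => (-1 : ℝ) ^ (Finset.univ.filter fun i => x i ∧ y i).card

/-- Every sign matrix `D ∈ M_d(±1)` appears as a submatrix of the Walsh matrix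
`W_M` with `M = 2^(d + ⌈log₂ d⌉)`. -/
theorem stmt_5 (d : ℕ) (D : Matrix (Fin d) (Fin d) ℝ)
    (hsign : ∀ i j, D i j = 1 ∨ D i j = -1) :
    ∃ (row : Fin d → (Fin (d + Nat.clog 2 d) → Bool))
      (col : Fin d → (Fin (d + Nat.clog 2 d) → Bool)),
      Function.Injective row ∧ Function.Injective col ∧
        D = (walsh (d + Nat.clog 2 d)).submatrix row col := by
  classical
  set m := Nat.clog 2 d with hm
  rcases Nat.eq_zero_or_pos d with hd | hd
  · subst hd
    exact ⟨fun i => i.elim0, fun i => i.elim0,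
      fun i => i.elim0, fun i => i.elim0, by ext i j; exact i.elim0⟩
  have hdpow : d ≤ 2 ^ m := Nat.le_pow_clog (by norm_num) d
  refine ⟨fun i k => decide (k.val = i.val),
    fun j k => if h : k.val < d then decide (D ⟨k.val, h⟩ j = -1)
               else Nat.testBit j.val (k.val - d), ?_, ?_, ?_⟩
  · intro a b h
    have h2 := congrFun h ⟨a.val, lt_of_lt_of_le a.isLt (Nat.le_add_right _ _)⟩
    simp only [decide_eq_decide] at h2
    exact Fin.ext (h2.mp trivial)
  · intro a b h
    apply Fin.ext
    apply Nat.eq_of_testBit_eq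
    intro t
    by_cases ht : t < m
    · have h2 := congrFun h ⟨d + t, by omega⟩
      simpa [Nat.add_sub_cancel_left] using h2
    · have h2t : (2:ℕ) ^ m ≤ 2 ^ t := Nat.pow_le_pow_right (by norm_num) (by omega)
      rw [Nat.testBit_eq_false_of_lt (by omega), Nat.testBit_eq_false_of_lt (by omega)]
  · ext i j
    have hS : (Finset.univ.filter fun k : Fin (d + m) =>
        (decide (k.val = i.val) : Bool) ∧
        ((if h : k.val < d then decide (D ⟨k.val, h⟩ j = -1)
          else Nat.testBit j.val (k.val - d)) : Bool)) =
        if D i j = -1 then {(⟨i.val, by omega⟩ : Fin (d + m))} else ∅ := by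
      ext k
      simp only [Finset.mem_filter, Finset.mem_univ, true_and, decide_eq_true_eq]
      constructor
      · rintro ⟨hk, hc⟩
        have hkd : k.val < d := hk ▸ i.isLt
        rw [dif_pos hkd] at hc
        have hDi : D ⟨k.val, hkd⟩ j = D i j := by congr 1; exact Fin.ext hk
        rw [hDi] at hc
        simp only [decide_eq_true_eq] at hc
        rw [if_pos hc]
        simp [Fin.ext_iff, hk]
      · intro hk
        by_cases hD : D i j = -1
        · rw [if_pos hD] at hk
          simp only [Finset.mem_singleton, Fin.ext_iff] at hk
          refine ⟨hk, ?_⟩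
          have hkd : k.val < d := hk ▸ i.isLt
          rw [dif_pos hkd]
          have hDi : D ⟨k.val, hkd⟩ j = D i j := by congr 1; exact Fin.ext hk
          simp [hDi, hD]
        · rw [if_neg hD] at hk
          simp at hk
    simp only [submatrix_apply, walsh, Matrix.of_apply, hS]
    by_cases hD : D i j = -1
    · rw [if_pos hD, hD]; simp
    · rw [if_neg hD]
      rcases hsign i j with h1 | h1
      · rw [h1]; simp
      · exact absurd h1 hD
end

section
/- Let H = [[A,B],[C,D]] ∈ M_N({±1}) be a Hadamard matrix with A ∈ M_r({±1}) invertible, D ∈ M_d({±1}), and with operator norm ‖A‖ < √N. Then the polar decomposition D = UT is given by U = (1/√N)(D − E) and T = √N·I_d − S, where E = C·(√N·I_r + √(AᵗA))⁻¹·Pol(A)ᵗ·B and S = Bᵗ·(√N·I_r + √(AAᵗ))⁻¹·B. In particular U is orthogonal and T is positive semi-definite. -/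
set_option maxHeartbeats 1000000

open Matrix

noncomputable def Matrix.PosSemidef.sqrt {n 𝕜 : Type*} [Fintype n] [DecidableEq n] [RCLike 𝕜]
    [PartialOrder 𝕜] {A : Matrix n n 𝕜} (hA : A.PosSemidef) : Matrix n n 𝕜 :=
  (hA.1.eigenvectorUnitary : Matrix n n 𝕜) * diagonal ((↑) ∘ Real.sqrt ∘ hA.1.eigenvalues) *
    (star (hA.1.eigenvectorUnitary : Matrix n n 𝕜))

open scoped MatrixOrder in
theorem Matrix.PosSemidef.sqrt_eq_cfcSqrt {n : Type*} [Fintype n] [DecidableEq n]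
    {A : Matrix n n ℝ} (hA : A.PosSemidef) : hA.sqrt = CFC.sqrt A := by
  have h0 : (0 : Matrix n n ℝ) ≤ A := Matrix.nonneg_iff_posSemidef.mpr hA
  rw [CFC.sqrt_eq_real_sqrt A h0, cfcₙ_eq_cfc, hA.1.cfc_eq, IsHermitian.cfc, Unitary.conjStarAlgAut_apply]
  rfl

open scoped MatrixOrder in
theorem Matrix.PosSemidef.posSemidef_sqrt {n : Type*} [Fintype n] [DecidableEq n]
    {A : Matrix n n ℝ} (hA : A.PosSemidef) : hA.sqrt.PosSemidef := by
  rw [hA.sqrt_eq_cfcSqrt]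
  exact Matrix.nonneg_iff_posSemidef.mp (CFC.sqrt_nonneg A)

open scoped MatrixOrder in
theorem Matrix.PosSemidef.sqrt_mul_self {n : Type*} [Fintype n] [DecidableEq n]
    {A : Matrix n n ℝ} (hA : A.PosSemidef) : hA.sqrt * hA.sqrt = A := by
  rw [hA.sqrt_eq_cfcSqrt]
  exact CFC.sqrt_mul_sqrt_self A (Matrix.nonneg_iff_posSemidef.mpr hA)

open scoped MatrixOrder in
theorem Matrix.PosSemidef.eq_sqrt_of_sq_eq {n : Type*} [Fintype n] [DecidableEq n]
    {A : Matrix n n ℝ} (hA : A.PosSemidef) {B : Matrix n n ℝ} (hB : B.PosSemidef)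
    (hAB : A ^ 2 = B) : A = hB.sqrt := by
  rw [hB.sqrt_eq_cfcSqrt]
  exact (CFC.sqrt_unique (by rw [← hAB, sq]) (Matrix.nonneg_iff_posSemidef.mpr hA)).symm

/-- Let `H = [[A,B],[C,D]] ∈ M_N(±1)` be a Hadamard matrix with `A ∈ M_r(±1)`
invertible and operator norm `‖A‖ < √N` (equivalently `N·I − AᵗA` positive
definite). Then the polar decomposition `D = U·T` is given by
`U = (1/√N)(D − E)` and `T = √N·I − S`, where
`E = C·(√N·I + √(AᵗA))⁻¹·Pol(A)ᵗ·B` and `S = Bᵗ·(√N·I + √(AAᵗ))⁻¹·B`;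
in particular `U` is orthogonal and `T` is positive semi-definite. -/
theorem stmt_7 (N r d : ℕ) (hN : N = r + d)
    (A : Matrix (Fin r) (Fin r) ℝ) (B : Matrix (Fin r) (Fin d) ℝ)
    (C : Matrix (Fin d) (Fin r) ℝ) (D : Matrix (Fin d) (Fin d) ℝ)
    (hsign : ∀ i j, Matrix.fromBlocks A B C D i j = 1 ∨
      Matrix.fromBlocks A B C D i j = -1)
    (hH : Matrix.fromBlocks A B C D * (Matrix.fromBlocks A B C D)ᵀ
      = (N : ℝ) • 1)
    (hA : IsUnit A.det)
    (hnorm : ((N : ℝ) • (1 : Matrix (Fin r) (Fin r) ℝ) - Aᵀ * A).PosDef)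
    (PA : Matrix (Fin r) (Fin r) ℝ) (hPA : PAᵀ * PA = 1)
    (hPApol : A = PA * (Matrix.posSemidef_conjTranspose_mul_self A).sqrt) :
    letI E := C * ((Real.sqrt N • (1 : Matrix (Fin r) (Fin r) ℝ) +
      (Matrix.posSemidef_conjTranspose_mul_self A).sqrt)⁻¹ * PAᵀ) * B
    letI S := Bᵀ * (Real.sqrt N • (1 : Matrix (Fin r) (Fin r) ℝ) +
      (Matrix.posSemidef_self_mul_conjTranspose A).sqrt)⁻¹ * B
    letI U := (Real.sqrt N)⁻¹ • (D - E)
    letI T := Real.sqrt N • (1 : Matrix (Fin d) (Fin d) ℝ) - S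
    Uᵀ * U = 1 ∧ T.PosSemidef ∧ D = U * T ∧
      T = (Matrix.posSemidef_conjTranspose_mul_self D).sqrt := by
  rcases Nat.eq_zero_or_pos d with hd | hd
  · subst hd
    refine ⟨Subsingleton.elim _ _, ⟨Subsingleton.elim _ _, fun x => by simp [Subsingleton.elim x 0]⟩,
      Subsingleton.elim _ _, Subsingleton.elim _ _⟩
  ·
    have hN0 : 0 < N := by omega
    have hNpos : (0:ℝ) < (N:ℝ) := by exact_mod_cast hN0
    have hNne : (N:ℝ) ≠ 0 := ne_of_gt hNpos
    set s := Real.sqrt N with hsdef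
    have hs : 0 < s := Real.sqrt_pos.mpr hNpos
    have hss : s * s = (N:ℝ) := Real.mul_self_sqrt (le_of_lt hNpos)
    set P := (Matrix.posSemidef_conjTranspose_mul_self A).sqrt with hPdef
    set Q := (Matrix.posSemidef_self_mul_conjTranspose A).sqrt with hQdef
    have hPpsd : P.PosSemidef := Matrix.PosSemidef.posSemidef_sqrt _
    have hQpsd : Q.PosSemidef := Matrix.PosSemidef.posSemidef_sqrt _
    have hP2 : P * P = Aᵀ * A := by
      have := (Matrix.posSemidef_conjTranspose_mul_self A).sqrt_mul_self
      rw [← hPdef] at this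
      rwa [conjTranspose_eq_transpose_of_trivial] at this
    have hQ2 : Q * Q = A * Aᵀ := by
      have := (Matrix.posSemidef_self_mul_conjTranspose A).sqrt_mul_self
      rw [← hQdef] at this
      rwa [conjTranspose_eq_transpose_of_trivial] at this
    have hPsym : Pᵀ = P := by
      have := hPpsd.1; rwa [IsHermitian, conjTranspose_eq_transpose_of_trivial] at this
    have hQsym : Qᵀ = Q := by
      have := hQpsd.1; rwa [IsHermitian, conjTranspose_eq_transpose_of_trivial] at this
    have hPA2 : PA * PAᵀ = 1 := mul_eq_one_comm.mp hPA
    -- block equations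
    have hH' : (Matrix.fromBlocks A B C D)ᵀ * Matrix.fromBlocks A B C D = (N:ℝ) • 1 := by
      have h1 : Matrix.fromBlocks A B C D * ((N:ℝ)⁻¹ • (Matrix.fromBlocks A B C D)ᵀ) = 1 := by
        rw [Matrix.mul_smul, hH, smul_smul, inv_mul_cancel₀ hNne, one_smul]
      have h2 := mul_eq_one_comm.mp h1
      rw [Matrix.smul_mul] at h2
      calc (Matrix.fromBlocks A B C D)ᵀ * Matrix.fromBlocks A B C D
          = (N:ℝ) • ((N:ℝ)⁻¹ • ((Matrix.fromBlocks A B C D)ᵀ * Matrix.fromBlocks A B C D)) := by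
            rw [smul_smul, mul_inv_cancel₀ hNne, one_smul]
        _ = (N:ℝ) • 1 := by rw [h2]
    have hblocks : Matrix.fromBlocks (A * Aᵀ + B * Bᵀ) (A * Cᵀ + B * Dᵀ) (C * Aᵀ + D * Bᵀ)
        (C * Cᵀ + D * Dᵀ) = Matrix.fromBlocks ((N:ℝ) • 1) 0 0 ((N:ℝ) • 1) := by
      rw [← Matrix.fromBlocks_multiply, ← Matrix.fromBlocks_transpose, hH,
        ← Matrix.fromBlocks_one, Matrix.fromBlocks_smul]
      simp
    have hblocks' : Matrix.fromBlocks (Aᵀ * A + Cᵀ * C) (Aᵀ * B + Cᵀ * D) (Bᵀ * A + Dᵀ * C)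
        (Bᵀ * B + Dᵀ * D) = Matrix.fromBlocks ((N:ℝ) • 1) 0 0 ((N:ℝ) • 1) := by
      rw [← Matrix.fromBlocks_multiply, ← Matrix.fromBlocks_transpose, hH',
        ← Matrix.fromBlocks_one, Matrix.fromBlocks_smul]
      simp
    have e1 : A * Aᵀ + B * Bᵀ = (N:ℝ) • 1 := congrArg Matrix.toBlocks₁₁ hblocks
    have e3 : C * Aᵀ + D * Bᵀ = 0 := congrArg Matrix.toBlocks₂₁ hblocks
    have e4 : C * Cᵀ + D * Dᵀ = (N:ℝ) • 1 := congrArg Matrix.toBlocks₂₂ hblocks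
    have e5 : Aᵀ * A + Cᵀ * C = (N:ℝ) • 1 := congrArg Matrix.toBlocks₁₁ hblocks'
    have e6 : Aᵀ * B + Cᵀ * D = 0 := congrArg Matrix.toBlocks₁₂ hblocks'
    have e7 : Bᵀ * B + Dᵀ * D = (N:ℝ) • 1 := congrArg Matrix.toBlocks₂₂ hblocks'
    -- M, M', inverses
    set M := s • (1 : Matrix (Fin r) (Fin r) ℝ) + P with hMdef
    set M' := s • (1 : Matrix (Fin r) (Fin r) ℝ) + Q with hM'def
    have hs1pd : (s • (1 : Matrix (Fin r) (Fin r) ℝ)).PosDef := by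
      refine Matrix.PosDef.of_dotProduct_mulVec_pos ?_ ?_
      · simp [Matrix.IsHermitian]
      · intro x hx
        simp only [Matrix.smul_mulVec, Matrix.one_mulVec, dotProduct_smul,
          smul_eq_mul]
        exact mul_pos hs (Matrix.dotProduct_star_self_pos_iff.mpr hx)
    have hMpd : M.PosDef := hs1pd.add_posSemidef hPpsd
    have hM'pd : M'.PosDef := hs1pd.add_posSemidef hQpsd
    have hMdet : IsUnit M.det := hMpd.det_pos.ne'.isUnit
    have hM'det : IsUnit M'.det := hM'pd.det_pos.ne'.isUnit
    set R := M⁻¹ with hRdef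
    set R' := M'⁻¹ with hR'def
    have hMR : M * R = 1 := Matrix.mul_nonsing_inv _ hMdet
    have hRM : R * M = 1 := Matrix.nonsing_inv_mul _ hMdet
    have hM'R' : M' * R' = 1 := Matrix.mul_nonsing_inv _ hM'det
    have hR'M' : R' * M' = 1 := Matrix.nonsing_inv_mul _ hM'det
    have hMsym : Mᵀ = M := by
      rw [hMdef, Matrix.transpose_add, Matrix.transpose_smul, Matrix.transpose_one, hPsym]
    have hM'sym : M'ᵀ = M' := by
      rw [hM'def, Matrix.transpose_add, Matrix.transpose_smul, Matrix.transpose_one, hQsym]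
    have hRsym : Rᵀ = R := by rw [hRdef, Matrix.transpose_nonsing_inv, hMsym]
    have hR'sym : R'ᵀ = R' := by rw [hR'def, Matrix.transpose_nonsing_inv, hM'sym]
    -- cancellation helpers
    have cPA1 : ∀ (m : ℕ) (X : Matrix (Fin r) (Fin m) ℝ), PAᵀ * (PA * X) = X := by
      intro m X; rw [← Matrix.mul_assoc, hPA, Matrix.one_mul]
    have cPA2 : ∀ (m : ℕ) (X : Matrix (Fin r) (Fin m) ℝ), PA * (PAᵀ * X) = X := by
      intro m X; rw [← Matrix.mul_assoc, hPA2, Matrix.one_mul]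
    have cMR : ∀ (m : ℕ) (X : Matrix (Fin r) (Fin m) ℝ), M * (R * X) = X := by
      intro m X; rw [← Matrix.mul_assoc, hMR, Matrix.one_mul]
    have cRM : ∀ (m : ℕ) (X : Matrix (Fin r) (Fin m) ℝ), R * (M * X) = X := by
      intro m X; rw [← Matrix.mul_assoc, hRM, Matrix.one_mul]
    -- P commutes with M and R
    have hPM : P * M = M * P := by
      rw [hMdef, Matrix.mul_add, Matrix.add_mul, Matrix.mul_smul, Matrix.smul_mul,
        Matrix.one_mul, Matrix.mul_one]
    have hPR : P * R = R * P := by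
      calc P * R = R * M * P * R := by rw [hRM, Matrix.one_mul]
        _ = R * (P * M) * R := by rw [Matrix.mul_assoc R M P, ← hPM]
        _ = R * P * (M * R) := by simp only [Matrix.mul_assoc]
        _ = R * P := by rw [hMR, Matrix.mul_one]
    -- Q = PA * P * PAᵀ and consequences
    have hQeq : Q = PA * P * PAᵀ := by
      have hpsd : (PA * P * PAᵀ).PosSemidef := by
        have := hPpsd.mul_mul_conjTranspose_same PA
        rwa [conjTranspose_eq_transpose_of_trivial] at this
      have hsq : (PA * P * PAᵀ) ^ 2 = A * Aᴴ := by
        rw [conjTranspose_eq_transpose_of_trivial, pow_two, hPApol, Matrix.transpose_mul, hPsym]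
        simp only [Matrix.mul_assoc, cPA1]
      have := hpsd.eq_sqrt_of_sq_eq (Matrix.posSemidef_self_mul_conjTranspose A) hsq
      rw [← hQdef] at this
      exact this.symm
    have hM'eq : M' = PA * M * PAᵀ := by
      simp only [hM'def, hMdef, hQeq, Matrix.mul_add, Matrix.add_mul, Matrix.mul_smul,
        Matrix.smul_mul, Matrix.mul_one, Matrix.one_mul, hPA2]
    have hR'eq : R' = PA * R * PAᵀ := by
      rw [hR'def]
      apply Matrix.inv_eq_left_inv
      rw [hM'eq]
      simp only [Matrix.mul_assoc, cPA1, cPA2, cRM]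
      exact hPA2
    -- K and derived identities
    set K := PAᵀ * B with hKdef
    have hKt : Kᵀ = Bᵀ * PA := by rw [hKdef, Matrix.transpose_mul, Matrix.transpose_transpose]
    have hAtPA : Aᵀ * PA = P := by
      rw [hPApol, Matrix.transpose_mul, hPsym, Matrix.mul_assoc, hPA, Matrix.mul_one]
    have hPAtA : PAᵀ * A = P := by rw [hPApol, ← Matrix.mul_assoc, hPA, Matrix.one_mul]
    have hAt : Aᵀ = P * PAᵀ := by rw [hPApol, Matrix.transpose_mul, hPsym]
    have hBBt : B * Bᵀ = (N:ℝ) • 1 - A * Aᵀ := eq_sub_of_add_eq' e1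
    have hKKt : K * Kᵀ = (N:ℝ) • 1 - P * P := by
      calc K * Kᵀ = PAᵀ * (B * Bᵀ) * PA := by rw [hKdef, hKt]; simp only [Matrix.mul_assoc]
        _ = PAᵀ * ((N:ℝ) • 1 - A * Aᵀ) * PA := by rw [hBBt]
        _ = (N:ℝ) • (PAᵀ * PA) - PAᵀ * A * (Aᵀ * PA) := by
            rw [Matrix.mul_sub, Matrix.sub_mul, Matrix.mul_smul, Matrix.mul_one, Matrix.smul_mul]
            simp only [Matrix.mul_assoc]
        _ = (N:ℝ) • 1 - P * P := by rw [hPA, hPAtA, hAtPA]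
    have hKtK : Kᵀ * K = Bᵀ * B := by rw [hKt, hKdef, Matrix.mul_assoc, cPA2]
    have hDtC : Dᵀ * C = -(Kᵀ * P) := by
      have h := congrArg Matrix.transpose e6
      rw [Matrix.transpose_add, Matrix.transpose_mul, Matrix.transpose_mul,
        Matrix.transpose_transpose, Matrix.transpose_transpose, Matrix.transpose_zero] at h
      have h2 : Dᵀ * C = -(Bᵀ * A) := eq_neg_of_add_eq_zero_right h
      rw [h2, hPApol, ← Matrix.mul_assoc, ← hKt]
    have hCtD : Cᵀ * D = -(P * K) := by
      have h2 : Cᵀ * D = -(Aᵀ * B) := eq_neg_of_add_eq_zero_right e6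
      rw [h2, hAt, Matrix.mul_assoc, ← hKdef]
    have hDKt : D * Kᵀ = -(C * P) := by
      have h2 : D * Bᵀ = -(C * Aᵀ) := eq_neg_of_add_eq_zero_right e3
      rw [hKt, ← Matrix.mul_assoc, h2, Matrix.neg_mul, Matrix.mul_assoc, hAtPA]
    have hCtC : Cᵀ * C = (N:ℝ) • 1 - P * P := by
      have h := eq_sub_of_add_eq' e5
      rwa [← hP2] at h
    have hMfact : (s • (1:Matrix (Fin r) (Fin r) ℝ) - P) * M = (N:ℝ) • 1 - P * P := by
      simp only [hMdef, Matrix.sub_mul, Matrix.mul_add, Matrix.smul_mul, Matrix.mul_smul,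
        Matrix.one_mul, Matrix.mul_one, smul_add, smul_sub, smul_smul, hss]
      abel
    have hcommSP : (s • (1:Matrix (Fin r) (Fin r) ℝ) - P) * R = R * (s • 1 - P) := by
      simp only [Matrix.sub_mul, Matrix.mul_sub, Matrix.smul_mul, Matrix.mul_smul,
        Matrix.one_mul, Matrix.mul_one, hPR]
    have hRfact : R * ((N:ℝ) • 1 - P * P) * R = (s • (1:Matrix (Fin r) (Fin r) ℝ) - P) * R := by
      rw [← hMfact]
      calc R * ((s • 1 - P) * M) * R = R * (s • 1 - P) * (M * R) := by simp only [Matrix.mul_assoc]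
        _ = R * (s • 1 - P) := by rw [hMR, Matrix.mul_one]
        _ = (s • 1 - P) * R := hcommSP.symm
    have q1 : R * (Cᵀ * C) * R = (s • (1:Matrix (Fin r) (Fin r) ℝ) - P) * R := by
      rw [hCtC]; exact hRfact
    have q2 : R * (K * Kᵀ) * R = (s • (1:Matrix (Fin r) (Fin r) ℝ) - P) * R := by
      rw [hKKt]; exact hRfact
    -- normal forms for E and S
    have hE : C * (R * PAᵀ) * B = C * (R * K) := by rw [hKdef]; simp only [Matrix.mul_assoc]
    have hS : Bᵀ * R' * B = Kᵀ * (R * K) := by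
      rw [hR'eq, hKt, hKdef]; simp only [Matrix.mul_assoc]
    -- pieces for goal 1
    have p1 : (C * (R * K))ᵀ = Kᵀ * (R * Cᵀ) := by
      simp only [Matrix.transpose_mul, hRsym, Matrix.mul_assoc]
    have hDtF : Dᵀ * (C * (R * K)) = -(Kᵀ * (P * (R * K))) := by
      rw [← Matrix.mul_assoc, hDtC]
      simp only [Matrix.neg_mul, Matrix.mul_assoc]
    have hFtD : (C * (R * K))ᵀ * D = -(Kᵀ * (R * (P * K))) := by
      calc (C * (R * K))ᵀ * D = Kᵀ * (R * (Cᵀ * D)) := by rw [p1]; simp only [Matrix.mul_assoc]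
        _ = -(Kᵀ * (R * (P * K))) := by rw [hCtD]; simp only [Matrix.mul_neg, Matrix.neg_mul]
    have hFtF : (C * (R * K))ᵀ * (C * (R * K)) = Kᵀ * ((s • 1 - P) * (R * K)) := by
      calc (C * (R * K))ᵀ * (C * (R * K)) = Kᵀ * ((R * (Cᵀ * C) * R) * K) := by
            rw [p1]; simp only [Matrix.mul_assoc]
        _ = Kᵀ * (((s • 1 - P) * R) * K) := by rw [q1]
        _ = Kᵀ * ((s • 1 - P) * (R * K)) := by simp only [Matrix.mul_assoc]
    have hZ : P * R + R * P + (s • (1:Matrix (Fin r) (Fin r) ℝ) - P) * R = 1 := by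
      have h9 : (s • (1:Matrix (Fin r) (Fin r) ℝ)) * R = R * (s • 1) := by
        rw [Matrix.smul_mul, Matrix.mul_smul, Matrix.one_mul, Matrix.mul_one]
      have h10 : R * (s • 1) + R * P = 1 := by rw [← Matrix.mul_add, ← hMdef]; exact hRM
      calc P * R + R * P + (s • 1 - P) * R
          = R * P + R * P + ((s • 1) * R - R * P) := by rw [Matrix.sub_mul, hPR]
        _ = R * (s • 1) + R * P := by rw [h9]; abel
        _ = 1 := h10
    have hsum : Kᵀ * (P * (R * K)) + Kᵀ * (R * (P * K)) + Kᵀ * ((s • 1 - P) * (R * K))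
        = Kᵀ * K := by
      calc Kᵀ * (P * (R * K)) + Kᵀ * (R * (P * K)) + Kᵀ * ((s • 1 - P) * (R * K))
          = Kᵀ * ((P * R + R * P + (s • 1 - P) * R) * K) := by
            simp only [Matrix.add_mul, Matrix.mul_add, Matrix.mul_assoc]
        _ = Kᵀ * K := by rw [hZ, Matrix.one_mul]
    have hDE : (D - C * (R * K))ᵀ * (D - C * (R * K)) = (N:ℝ) • 1 := by
      have expand : (D - C * (R * K))ᵀ * (D - C * (R * K))
          = Dᵀ * D - Dᵀ * (C * (R * K)) - (C * (R * K))ᵀ * D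
            + (C * (R * K))ᵀ * (C * (R * K)) := by
        rw [Matrix.transpose_sub, Matrix.sub_mul, Matrix.mul_sub, Matrix.mul_sub]
        abel
      rw [expand, hDtF, hFtD, hFtF]
      have : Dᵀ * D - -(Kᵀ * (P * (R * K))) - -(Kᵀ * (R * (P * K)))
          + Kᵀ * ((s • 1 - P) * (R * K))
          = Dᵀ * D + (Kᵀ * (P * (R * K)) + Kᵀ * (R * (P * K))
            + Kᵀ * ((s • 1 - P) * (R * K))) := by abel
      rw [this, hsum, hKtK, add_comm]
      exact e7
    have g1 : ((s:ℝ)⁻¹ • (D - C * (R * PAᵀ) * B))ᵀ * ((s:ℝ)⁻¹ • (D - C * (R * PAᵀ) * B)) = 1 := by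
      rw [hE]
      rw [Matrix.transpose_smul, Matrix.smul_mul, Matrix.mul_smul, hDE, smul_smul, smul_smul]
      have hsc : s⁻¹ * s⁻¹ * (N:ℝ) = 1 := by
        rw [← hss]; field_simp
      rw [hsc, one_smul]
    -- goal 3
    have hDS : D * (Kᵀ * (R * K)) = -(C * (P * (R * K))) := by
      rw [← Matrix.mul_assoc, hDKt]
      simp only [Matrix.neg_mul, Matrix.mul_assoc]
    have hFS : (C * (R * K)) * (Kᵀ * (R * K)) = C * ((s • 1 - P) * (R * K)) := by
      calc (C * (R * K)) * (Kᵀ * (R * K)) = C * ((R * (K * Kᵀ) * R) * K) := by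
            simp only [Matrix.mul_assoc]
        _ = C * (((s • 1 - P) * R) * K) := by rw [q2]
        _ = C * ((s • 1 - P) * (R * K)) := by simp only [Matrix.mul_assoc]
    have hmain : (D - C * (R * K)) * (s • (1:Matrix (Fin d) (Fin d) ℝ) - Kᵀ * (R * K))
        = s • D := by
      rw [Matrix.sub_mul, Matrix.mul_sub, Matrix.mul_sub, hDS, hFS, Matrix.mul_smul,
        Matrix.mul_smul, Matrix.mul_one, Matrix.mul_one]
      have : C * ((s • 1 - P) * (R * K)) = s • (C * (R * K)) - C * (P * (R * K)) := by
        rw [Matrix.sub_mul, Matrix.mul_sub, Matrix.smul_mul, Matrix.one_mul, Matrix.mul_smul]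
      rw [this]
      abel
    have g3 : D = ((s:ℝ)⁻¹ • (D - C * (R * PAᵀ) * B)) * (s • 1 - Bᵀ * R' * B) := by
      rw [hE, hS, Matrix.smul_mul, hmain, smul_smul, inv_mul_cancel₀ (ne_of_gt hs), one_smul]
    -- goal 2 : T is PosSemidef
    have hSsym : (Bᵀ * R' * B)ᵀ = Bᵀ * R' * B := by
      simp only [Matrix.transpose_mul, Matrix.transpose_transpose, hR'sym, Matrix.mul_assoc]
    have dotsq : ∀ (k : ℕ) (v : Fin k → ℝ), 0 ≤ v ⬝ᵥ v := fun k v =>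
      Finset.sum_nonneg fun i _ => mul_self_nonneg _
    have hstar : ∀ (k : ℕ) (v : Fin k → ℝ), star v = v := fun k v =>
      funext fun i => star_trivial _
    have adj : ∀ (Z : Matrix (Fin r) (Fin r) ℝ), Zᵀ = Z → ∀ v w : Fin r → ℝ,
        v ⬝ᵥ (Z *ᵥ w) = (Z *ᵥ v) ⬝ᵥ w := by
      intro Z hZsym v w
      rw [Matrix.dotProduct_mulVec]
      conv_lhs => rw [← hZsym]
      rw [Matrix.vecMul_transpose]
    have adjB : ∀ (v : Fin d → ℝ) (w : Fin r → ℝ), v ⬝ᵥ (Bᵀ *ᵥ w) = (B *ᵥ v) ⬝ᵥ w := by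
      intro v w; rw [Matrix.dotProduct_mulVec, Matrix.vecMul_transpose]
    have adjD : ∀ v w : Fin d → ℝ, v ⬝ᵥ (Dᵀ *ᵥ w) = (D *ᵥ v) ⬝ᵥ w := by
      intro v w; rw [Matrix.dotProduct_mulVec, Matrix.vecMul_transpose]
    have hTsym : (s • (1:Matrix (Fin d) (Fin d) ℝ) - Bᵀ * R' * B)ᵀ = s • 1 - Bᵀ * R' * B := by
      rw [Matrix.transpose_sub, Matrix.transpose_smul, Matrix.transpose_one, hSsym]
    have g2 : (s • (1:Matrix (Fin d) (Fin d) ℝ) - Bᵀ * R' * B).PosSemidef := by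
      refine Matrix.PosSemidef.of_dotProduct_mulVec_nonneg ?_ ?_
      · show _ᴴ = _
        rw [conjTranspose_eq_transpose_of_trivial]
        exact hTsym
      · intro x
        rw [hstar]
        have hyu : M' *ᵥ (R' *ᵥ (B *ᵥ x)) = B *ᵥ x := by
          rw [Matrix.mulVec_mulVec, hM'R', Matrix.one_mulVec]
        have t1 : x ⬝ᵥ ((Bᵀ * R' * B) *ᵥ x) = (B *ᵥ x) ⬝ᵥ (R' *ᵥ (B *ᵥ x)) := by
          rw [← Matrix.mulVec_mulVec, ← Matrix.mulVec_mulVec, adjB]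
        have t2 : (R' *ᵥ (B *ᵥ x)) ⬝ᵥ (M' *ᵥ (R' *ᵥ (B *ᵥ x)))
            = (B *ᵥ x) ⬝ᵥ (R' *ᵥ (B *ᵥ x)) := by
          rw [adj M' hM'sym, hyu]
        have t3 : (B *ᵥ x) ⬝ᵥ (B *ᵥ x) = (N:ℝ) * (x ⬝ᵥ x) - (D *ᵥ x) ⬝ᵥ (D *ᵥ x) := by
          have hBtB : Bᵀ * B = (N:ℝ) • 1 - Dᵀ * D := eq_sub_of_add_eq e7
          have h1 : (B *ᵥ x) ⬝ᵥ (B *ᵥ x) = x ⬝ᵥ ((Bᵀ * B) *ᵥ x) := by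
            rw [← Matrix.mulVec_mulVec, adjB]
          rw [h1, hBtB, Matrix.sub_mulVec, dotProduct_sub, Matrix.smul_mulVec,
            Matrix.one_mulVec, dotProduct_smul, smul_eq_mul, ← Matrix.mulVec_mulVec, adjD]
        have t4 : M' * M' = s • M' + (s • Q + Q * Q) := by
          simp only [hM'def, Matrix.add_mul, Matrix.mul_add, Matrix.smul_mul, Matrix.mul_smul,
            Matrix.one_mul, Matrix.mul_one, smul_add, smul_smul]
          try abel
        have t5 : (R' *ᵥ (B *ᵥ x)) ⬝ᵥ ((M' * M') *ᵥ (R' *ᵥ (B *ᵥ x)))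
            = s * ((R' *ᵥ (B *ᵥ x)) ⬝ᵥ (M' *ᵥ (R' *ᵥ (B *ᵥ x))))
              + (s * ((R' *ᵥ (B *ᵥ x)) ⬝ᵥ (Q *ᵥ (R' *ᵥ (B *ᵥ x))))
                + (Q *ᵥ (R' *ᵥ (B *ᵥ x))) ⬝ᵥ (Q *ᵥ (R' *ᵥ (B *ᵥ x)))) := by
          have tQQ : (R' *ᵥ (B *ᵥ x)) ⬝ᵥ ((Q * Q) *ᵥ (R' *ᵥ (B *ᵥ x)))
              = (Q *ᵥ (R' *ᵥ (B *ᵥ x))) ⬝ᵥ (Q *ᵥ (R' *ᵥ (B *ᵥ x))) := by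
            rw [← Matrix.mulVec_mulVec, adj Q hQsym]
          rw [t4, Matrix.add_mulVec, Matrix.add_mulVec, Matrix.smul_mulVec,
            Matrix.smul_mulVec, dotProduct_add, dotProduct_add,
            dotProduct_smul, dotProduct_smul, smul_eq_mul, smul_eq_mul, tQQ]
        have t6 : (R' *ᵥ (B *ᵥ x)) ⬝ᵥ ((M' * M') *ᵥ (R' *ᵥ (B *ᵥ x)))
            = (B *ᵥ x) ⬝ᵥ (B *ᵥ x) := by
          rw [← Matrix.mulVec_mulVec, hyu, adj M' hM'sym, hyu]
        have key : s * (x ⬝ᵥ ((s • (1:Matrix (Fin d) (Fin d) ℝ) - Bᵀ * R' * B) *ᵥ x))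
            = (D *ᵥ x) ⬝ᵥ (D *ᵥ x) + s * ((R' *ᵥ (B *ᵥ x)) ⬝ᵥ (Q *ᵥ (R' *ᵥ (B *ᵥ x))))
              + (Q *ᵥ (R' *ᵥ (B *ᵥ x))) ⬝ᵥ (Q *ᵥ (R' *ᵥ (B *ᵥ x))) := by
          rw [Matrix.sub_mulVec, dotProduct_sub, Matrix.smul_mulVec,
            Matrix.one_mulVec, dotProduct_smul, smul_eq_mul, t1]
          linear_combination (x ⬝ᵥ x) * hss + t5 - t6 - t3 + s * t2
        have h1 : 0 ≤ (D *ᵥ x) ⬝ᵥ (D *ᵥ x) := dotsq _ _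
        have h2 : 0 ≤ (R' *ᵥ (B *ᵥ x)) ⬝ᵥ (Q *ᵥ (R' *ᵥ (B *ᵥ x))) := by
          have hq := hQpsd.dotProduct_mulVec_nonneg (R' *ᵥ (B *ᵥ x))
          rwa [hstar] at hq
        have h3 : 0 ≤ (Q *ᵥ (R' *ᵥ (B *ᵥ x))) ⬝ᵥ (Q *ᵥ (R' *ᵥ (B *ᵥ x))) := dotsq _ _
        have h4 : 0 ≤ s * (x ⬝ᵥ ((s • (1:Matrix (Fin d) (Fin d) ℝ) - Bᵀ * R' * B) *ᵥ x)) := by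
          rw [key]; nlinarith [h1, h2, h3, hs]
        nlinarith [h4, hs]
    -- goal 4
    have hT2 : (s • (1:Matrix (Fin d) (Fin d) ℝ) - Bᵀ * R' * B) ^ 2 = Dᴴ * D := by
      rw [conjTranspose_eq_transpose_of_trivial, pow_two]
      calc (s • (1:Matrix (Fin d) (Fin d) ℝ) - Bᵀ * R' * B) * (s • 1 - Bᵀ * R' * B)
          = (s • (1:Matrix (Fin d) (Fin d) ℝ) - Bᵀ * R' * B)ᵀ
            * ((1:Matrix (Fin d) (Fin d) ℝ) * (s • 1 - Bᵀ * R' * B)) := by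
            rw [hTsym, Matrix.one_mul]
        _ = (s • (1:Matrix (Fin d) (Fin d) ℝ) - Bᵀ * R' * B)ᵀ
            * ((((s:ℝ)⁻¹ • (D - C * (R * PAᵀ) * B))ᵀ * ((s:ℝ)⁻¹ • (D - C * (R * PAᵀ) * B)))
              * (s • 1 - Bᵀ * R' * B)) := by rw [g1]
        _ = (((s:ℝ)⁻¹ • (D - C * (R * PAᵀ) * B)) * (s • 1 - Bᵀ * R' * B))ᵀ
            * (((s:ℝ)⁻¹ • (D - C * (R * PAᵀ) * B)) * (s • 1 - Bᵀ * R' * B)) := by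
            rw [Matrix.transpose_mul]; simp only [Matrix.mul_assoc]
        _ = Dᵀ * D := by rw [← g3]
    have g4 : s • (1:Matrix (Fin d) (Fin d) ℝ) - Bᵀ * R' * B
        = (Matrix.posSemidef_conjTranspose_mul_self D).sqrt :=
      g2.eq_sqrt_of_sq_eq (Matrix.posSemidef_conjTranspose_mul_self D) hT2
    exact ⟨g1, g2, g3, g4⟩
end

section
/- Let H = [[A,B],[C,D]] ∈ M_N({±1}) be Hadamard with A ∈ M_r({±1}) invertible, r ≤ d, and r² < N. Then with E defined by Pol(D) = (1/√N)(D − E), one has ‖E‖_∞ ≤ r²(1 + √N)/(N − r²). -/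
open Matrix

attribute [local instance] Matrix.normedAddCommGroup

namespace Stmt12Aux

noncomputable def msqrt {k : ℕ} {M : Matrix (Fin k) (Fin k) ℝ} (hM : M.PosSemidef) :
    Matrix (Fin k) (Fin k) ℝ :=
  hM.1.eigenvectorUnitary * Matrix.diagonal (Real.sqrt ∘ hM.1.eigenvalues) *
    (star hM.1.eigenvectorUnitary : Matrix (Fin k) (Fin k) ℝ)

lemma msqrt_psd {k : ℕ} {M : Matrix (Fin k) (Fin k) ℝ} (hM : M.PosSemidef) :
    (msqrt hM).PosSemidef := by
  have h := (Matrix.PosSemidef.diagonal (d := Real.sqrt ∘ hM.1.eigenvalues)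
    (fun i => Real.sqrt_nonneg _)).mul_mul_conjTranspose_same
    (hM.1.eigenvectorUnitary : Matrix (Fin k) (Fin k) ℝ)
  rw [← Matrix.star_eq_conjTranspose] at h
  exact h

lemma msqrt_mul_self {k : ℕ} {M : Matrix (Fin k) (Fin k) ℝ} (hM : M.PosSemidef) :
    msqrt hM * msqrt hM = M := by
  have hU : (star hM.1.eigenvectorUnitary : Matrix (Fin k) (Fin k) ℝ) *
      (hM.1.eigenvectorUnitary : Matrix (Fin k) (Fin k) ℝ) = 1 :=
    Unitary.coe_star_mul_self _
  conv_rhs => rw [hM.1.spectral_theorem, Unitary.conjStarAlgAut_apply]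
  unfold msqrt
  simp only [Matrix.mul_assoc]
  rw [← Matrix.mul_assoc (star _) _ (Matrix.diagonal _ * _), hU, Matrix.one_mul,
    ← Matrix.mul_assoc (Matrix.diagonal _) (Matrix.diagonal _), Matrix.diagonal_mul_diagonal]
  congr 2
  · congr 1
    funext i
    simp [Real.mul_self_sqrt (hM.eigenvalues_nonneg i)]

lemma trace_tmul_self_nonneg {a b : ℕ} (Y : Matrix (Fin a) (Fin b) ℝ) :
    0 ≤ (Yᵀ * Y).trace := by
  rw [Matrix.trace]
  refine Finset.sum_nonneg fun j _ => ?_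
  rw [Matrix.diag_apply, Matrix.mul_apply]
  exact Finset.sum_nonneg fun i _ => by
    simp only [Matrix.transpose_apply]; exact mul_self_nonneg _

lemma eq_zero_of_trace_tmul_self {a b : ℕ} (Y : Matrix (Fin a) (Fin b) ℝ)
    (h : (Yᵀ * Y).trace = 0) : Y = 0 := by
  have h2 : ∀ j ∈ Finset.univ, (0:ℝ) ≤ (Yᵀ * Y).diag j := fun j _ => by
    rw [Matrix.diag_apply, Matrix.mul_apply]
    exact Finset.sum_nonneg fun i _ => by
      simp only [Matrix.transpose_apply]; exact mul_self_nonneg _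
  rw [Matrix.trace] at h
  have h3 := (Finset.sum_eq_zero_iff_of_nonneg h2).mp h
  ext i j
  have h4 := h3 j (Finset.mem_univ j)
  rw [Matrix.diag_apply, Matrix.mul_apply] at h4
  have h5 : ∀ k ∈ Finset.univ, (0:ℝ) ≤ Yᵀ j k * Y k j := fun k _ => by
    simp only [Matrix.transpose_apply]; exact mul_self_nonneg _
  have h6 := (Finset.sum_eq_zero_iff_of_nonneg h5).mp h4 i (Finset.mem_univ i)
  simp only [Matrix.transpose_apply] at h6
  have := mul_self_eq_zero.mp h6
  simpa using this

lemma sylvester {n m : ℕ} {T : Matrix (Fin n) (Fin n) ℝ} {S : Matrix (Fin m) (Fin m) ℝ}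
    {X : Matrix (Fin n) (Fin m) ℝ} (hT : T.PosSemidef) (hS : S.PosSemidef)
    (hTdet : IsUnit T.det) (hX : T * X = -(X * S)) : X = 0 := by
  set U := msqrt hT with hU
  have hUpsd := msqrt_psd hT
  have hU2 : U * U = T := msqrt_mul_self hT
  have hUt : Uᵀ = U := by
    have := hUpsd.1
    rwa [Matrix.IsHermitian, Matrix.conjTranspose_eq_transpose_of_trivial] at this
  have hUdet : IsUnit U.det := by
    have : IsUnit (U.det * U.det) := by rw [← Matrix.det_mul, hU2]; exact hTdet
    exact isUnit_of_mul_isUnit_left this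
  set R := msqrt hS with hR
  have hRpsd := msqrt_psd hS
  have hR2 : R * R = S := msqrt_mul_self hS
  have hRt : Rᵀ = R := by
    have := hRpsd.1
    rwa [Matrix.IsHermitian, Matrix.conjTranspose_eq_transpose_of_trivial] at this
  -- trace identities
  have key : ((U * X)ᵀ * (U * X)).trace = -(((X * R)ᵀ * (X * R)).trace) := by
    have e1 : (U * X)ᵀ * (U * X) = Xᵀ * (T * X) := by
      rw [Matrix.transpose_mul, hUt, Matrix.mul_assoc, ← Matrix.mul_assoc U, hU2]
    have e2 : ((X * R)ᵀ * (X * R)).trace = (Xᵀ * (X * S)).trace := by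
      rw [Matrix.transpose_mul, hRt]
      rw [Matrix.mul_assoc]
      rw [Matrix.trace_mul_comm R]
      rw [Matrix.mul_assoc, Matrix.mul_assoc, ← Matrix.mul_assoc Xᵀ X, ← Matrix.mul_assoc Xᵀ X,
        hR2, Matrix.mul_assoc]
    rw [e1, e2, hX]
    simp [Matrix.mul_neg]
  have h1 := trace_tmul_self_nonneg (U * X)
  have h2 := trace_tmul_self_nonneg (X * R)
  have hz : ((U * X)ᵀ * (U * X)).trace = 0 := le_antisymm (by rw [key]; linarith) h1
  have hUX : U * X = 0 := eq_zero_of_trace_tmul_self _ hz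
  calc X = (U⁻¹ * U) * X := by rw [Matrix.nonsing_inv_mul _ hUdet, Matrix.one_mul]
  _ = U⁻¹ * (U * X) := by rw [Matrix.mul_assoc]
  _ = 0 := by rw [hUX, Matrix.mul_zero]

lemma isUnit_det_add_smul_one {k : ℕ} {T : Matrix (Fin k) (Fin k) ℝ} (hT : T.PosSemidef)
    {c : ℝ} (hc : 0 < c) : IsUnit (T + c • 1).det := by
  rw [isUnit_iff_ne_zero]
  intro hdet
  obtain ⟨v, hv, hv0⟩ := (Matrix.exists_mulVec_eq_zero_iff).mpr hdet
  have h1 : (0:ℝ) = v ⬝ᵥ ((T + c • 1) *ᵥ v) := by rw [hv0, dotProduct_zero]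
  rw [Matrix.add_mulVec, dotProduct_add, Matrix.smul_mulVec,
    Matrix.one_mulVec, dotProduct_smul] at h1
  have h2 : 0 ≤ v ⬝ᵥ (T *ᵥ v) := by have := hT.dotProduct_mulVec_nonneg v; simpa using this
  have h3 : 0 < v ⬝ᵥ v := by
    have hnn : 0 ≤ v ⬝ᵥ v := Finset.sum_nonneg fun i _ => mul_self_nonneg _
    have hne : v ⬝ᵥ v ≠ 0 := fun h => hv (dotProduct_self_eq_zero.mp h)
    exact lt_of_le_of_ne hnn (Ne.symm hne)
  rw [smul_eq_mul] at h1
  nlinarith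

end Stmt12Aux


set_option maxHeartbeats 1600000 in
/-- Let `H = [[A,B],[C,D]] ∈ M_N(±1)` be Hadamard with `A ∈ M_r(±1)`
invertible, `r ≤ d` and `r² < N`. Then with `E` defined by
`Pol(D) = (1/√N)(D − E)`, i.e. `E = D − √N·Pol(D)`, one has
`‖E‖_∞ ≤ r²(1 + √N)/(N − r²)`. -/
theorem stmt_12 (N r d : ℕ) (hN : N = r + d) (hrd : r ≤ d) (hrN : r ^ 2 < N)
    (A : Matrix (Fin r) (Fin r) ℝ) (B : Matrix (Fin r) (Fin d) ℝ)
    (C : Matrix (Fin d) (Fin r) ℝ) (D : Matrix (Fin d) (Fin d) ℝ)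
    (hsign : ∀ i j, Matrix.fromBlocks A B C D i j = 1 ∨
      Matrix.fromBlocks A B C D i j = -1)
    (hH : Matrix.fromBlocks A B C D * (Matrix.fromBlocks A B C D)ᵀ
      = (N : ℝ) • 1)
    (hA : IsUnit A.det)
    (PD : Matrix (Fin d) (Fin d) ℝ) (hPD : PDᵀ * PD = 1)
    (hPDpol : D = PD * ((Matrix.posSemidef_conjTranspose_mul_self D).1.eigenvectorUnitary *
      Matrix.diagonal (Real.sqrt ∘ (Matrix.posSemidef_conjTranspose_mul_self D).1.eigenvalues) *
      (star (Matrix.posSemidef_conjTranspose_mul_self D).1.eigenvectorUnitary :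
        Matrix (Fin d) (Fin d) ℝ))) :
    ‖D - Real.sqrt N • PD‖ ≤ r ^ 2 * (1 + Real.sqrt N) / (N - r ^ 2) := by
  have hNpos : 0 < N := Nat.lt_of_le_of_lt (Nat.zero_le _) hrN
  have hNR : (0:ℝ) < (N:ℝ) := by exact_mod_cast hNpos
  have hsN : 0 < Real.sqrt N := Real.sqrt_pos.mpr hNR
  have hsNsq : Real.sqrt N * Real.sqrt N = (N:ℝ) := Real.mul_self_sqrt hNR.le
  set H := Matrix.fromBlocks A B C D with hHdef
  -- H^T H = N 1
  have hH' : Hᵀ * H = (N : ℝ) • 1 := by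
    have h1 : H * ((N:ℝ)⁻¹ • Hᵀ) = 1 := by
      rw [Matrix.mul_smul, hH, smul_smul, inv_mul_cancel₀ hNR.ne', one_smul]
    have h2 := mul_eq_one_comm.mp h1
    calc Hᵀ * H = (N:ℝ) • (((N:ℝ)⁻¹ • Hᵀ) * H) := by
          rw [Matrix.smul_mul, smul_smul, mul_inv_cancel₀ hNR.ne', one_smul]
      _ = (N:ℝ) • 1 := by rw [h2]
  -- block identities
  have hblocks1 : Matrix.fromBlocks (A*Aᵀ + B*Bᵀ) (A*Cᵀ + B*Dᵀ) (C*Aᵀ + D*Bᵀ) (C*Cᵀ + D*Dᵀ)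
      = Matrix.fromBlocks ((N:ℝ)•1) 0 0 ((N:ℝ)•1) := by
    rw [← Matrix.fromBlocks_multiply, ← Matrix.fromBlocks_transpose, ← hHdef, hH,
      ← Matrix.fromBlocks_one, Matrix.fromBlocks_smul]
    simp
  have hblocks2 : Matrix.fromBlocks (Aᵀ*A + Cᵀ*C) (Aᵀ*B + Cᵀ*D) (Bᵀ*A + Dᵀ*C) (Bᵀ*B + Dᵀ*D)
      = Matrix.fromBlocks ((N:ℝ)•1) 0 0 ((N:ℝ)•1) := by
    rw [← Matrix.fromBlocks_multiply, ← Matrix.fromBlocks_transpose, ← hHdef, hH',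
      ← Matrix.fromBlocks_one, Matrix.fromBlocks_smul]
    simp
  have eq1 : A*Aᵀ + B*Bᵀ = (N:ℝ)•1 := by
    have := congrArg Matrix.toBlocks₁₁ hblocks1
    simpa [Matrix.toBlocks_fromBlocks₁₁] using this
  have eq2 : C*Aᵀ + D*Bᵀ = 0 := by
    have := congrArg Matrix.toBlocks₂₁ hblocks1
    simpa [Matrix.toBlocks_fromBlocks₂₁] using this
  have eq3 : Bᵀ*B + Dᵀ*D = (N:ℝ)•1 := by
    have := congrArg Matrix.toBlocks₂₂ hblocks2
    simpa [Matrix.toBlocks_fromBlocks₂₂] using this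
  -- the square roots
  obtain ⟨S, hSdef⟩ : ∃ S', S' = Stmt12Aux.msqrt (Matrix.posSemidef_conjTranspose_mul_self D) := ⟨_, rfl⟩
  change D = PD * Stmt12Aux.msqrt (Matrix.posSemidef_conjTranspose_mul_self D) at hPDpol
  rw [← hSdef] at hPDpol
  have hSpsd : S.PosSemidef := by
    rw [hSdef]; exact Stmt12Aux.msqrt_psd (Matrix.posSemidef_conjTranspose_mul_self D)
  have hS2 : S * S = Dᵀ * D := by
    rw [hSdef]
    exact (Stmt12Aux.msqrt_mul_self (Matrix.posSemidef_conjTranspose_mul_self D)).trans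
      (by rw [Matrix.conjTranspose_eq_transpose_of_trivial])
  have hSt : Sᵀ = S :=
    (Matrix.conjTranspose_eq_transpose_of_trivial S).symm.trans hSpsd.1
  have hAAT : (A * Aᵀ).PosSemidef := by
    have := Matrix.posSemidef_self_mul_conjTranspose A
    rwa [Matrix.conjTranspose_eq_transpose_of_trivial] at this
  obtain ⟨T, hTdef⟩ : ∃ T', T' = Stmt12Aux.msqrt hAAT := ⟨_, rfl⟩
  have hTpsd : T.PosSemidef := by rw [hTdef]; exact Stmt12Aux.msqrt_psd hAAT
  have hT2 : T * T = A * Aᵀ := by rw [hTdef]; exact Stmt12Aux.msqrt_mul_self hAAT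
  have hTt : Tᵀ = T :=
    (Matrix.conjTranspose_eq_transpose_of_trivial T).symm.trans hTpsd.1
  have hTdet : IsUnit T.det := by
    have h : IsUnit (T.det * T.det) := by
      rw [← Matrix.det_mul, hT2, Matrix.det_mul, Matrix.det_transpose]
      exact hA.mul hA
    exact isUnit_of_mul_isUnit_left h
  -- derived identities
  have eqDTD : Dᵀ * D = (N:ℝ)•1 - Bᵀ*B := by rw [← eq3]; abel
  have eqBBT : B * Bᵀ = (N:ℝ)•1 - A*Aᵀ := by rw [← eq1]; abel
  have eqDBT : D * Bᵀ = -(C * Aᵀ) := by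
    have h : D * Bᵀ = (C*Aᵀ + D*Bᵀ) - C*Aᵀ := by abel
    rw [h, eq2]; abel
  -- D^T D invertible
  have hDTDdet : IsUnit (Dᵀ * D).det := by
    rw [isUnit_iff_ne_zero]
    intro hdet
    obtain ⟨v, hv, hv0⟩ := (Matrix.exists_mulVec_eq_zero_iff).mpr hdet
    have hv1 : (Bᵀ*B) *ᵥ v = (N:ℝ) • v := by
      have : ((N:ℝ)•1 - Bᵀ*B) *ᵥ v = 0 := by rw [← eqDTD]; exact hv0
      rw [Matrix.sub_mulVec, sub_eq_zero, Matrix.smul_mulVec, Matrix.one_mulVec] at this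
      exact this.symm
    obtain ⟨y, hy⟩ : ∃ y', y' = B *ᵥ v := ⟨_, rfl⟩
    have hBty : Bᵀ *ᵥ y = (N:ℝ) • v := by
      rw [hy, Matrix.mulVec_mulVec, hv1]
    have hyy : y ⬝ᵥ y = (N:ℝ) * (v ⬝ᵥ v) := by
      calc y ⬝ᵥ y = y ⬝ᵥ (B *ᵥ v) := by rw [hy]
        _ = (y ᵥ* B) ⬝ᵥ v := Matrix.dotProduct_mulVec y B v
        _ = (Bᵀ *ᵥ y) ⬝ᵥ v := by rw [Matrix.mulVec_transpose]
        _ = ((N:ℝ) • v) ⬝ᵥ v := by rw [hBty]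
        _ = (N:ℝ) * (v ⬝ᵥ v) := by rw [smul_dotProduct, smul_eq_mul]
    obtain ⟨u, hu⟩ : ∃ u', u' = Aᵀ *ᵥ y := ⟨_, rfl⟩
    have key : (N:ℝ)*(N:ℝ)*(v ⬝ᵥ v) = (N:ℝ)*((N:ℝ)*(v ⬝ᵥ v)) - u ⬝ᵥ u := by
      have lhs : (Bᵀ *ᵥ y) ⬝ᵥ (Bᵀ *ᵥ y) = (N:ℝ)*(N:ℝ)*(v ⬝ᵥ v) := by
        rw [hBty, smul_dotProduct, dotProduct_smul, smul_eq_mul, smul_eq_mul]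
        ring
      have rhs : (Bᵀ *ᵥ y) ⬝ᵥ (Bᵀ *ᵥ y) = (N:ℝ)*(y ⬝ᵥ y) - u ⬝ᵥ u := by
        calc (Bᵀ *ᵥ y) ⬝ᵥ (Bᵀ *ᵥ y) = ((Bᵀ *ᵥ y) ᵥ* Bᵀ) ⬝ᵥ y := Matrix.dotProduct_mulVec _ _ _
          _ = (B *ᵥ (Bᵀ *ᵥ y)) ⬝ᵥ y := by rw [Matrix.vecMul_transpose]
          _ = ((B * Bᵀ) *ᵥ y) ⬝ᵥ y := by rw [Matrix.mulVec_mulVec]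
          _ = (((N:ℝ)•1 - A*Aᵀ) *ᵥ y) ⬝ᵥ y := by rw [eqBBT]
          _ = ((N:ℝ) • y) ⬝ᵥ y - ((A*Aᵀ) *ᵥ y) ⬝ᵥ y := by
              rw [Matrix.sub_mulVec, sub_dotProduct, Matrix.smul_mulVec,
                Matrix.one_mulVec]
          _ = (N:ℝ)*(y ⬝ᵥ y) - u ⬝ᵥ u := by
              rw [smul_dotProduct, smul_eq_mul]
              congr 1
              calc ((A*Aᵀ) *ᵥ y) ⬝ᵥ y = (A *ᵥ (Aᵀ *ᵥ y)) ⬝ᵥ y := by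
                    rw [← Matrix.mulVec_mulVec]
                _ = (A *ᵥ u) ⬝ᵥ y := by rw [hu]
                _ = y ⬝ᵥ (A *ᵥ u) := dotProduct_comm _ _
                _ = (y ᵥ* A) ⬝ᵥ u := Matrix.dotProduct_mulVec _ _ _
                _ = (Aᵀ *ᵥ y) ⬝ᵥ u := by rw [← Matrix.mulVec_transpose]
                _ = u ⬝ᵥ u := by rw [hu]
      rw [← lhs, rhs, hyy]
    have huu : u ⬝ᵥ u = 0 := by nlinarith [key]
    have hu0 : u = 0 := dotProduct_self_eq_zero.mp huu
    have hy0 : y = 0 := by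
      by_contra hy0
      have : Aᵀ.det = 0 := Matrix.exists_mulVec_eq_zero_iff.mp ⟨y, hy0, hu.symm.trans hu0⟩
      rw [Matrix.det_transpose] at this
      exact (isUnit_iff_ne_zero.mp hA) this
    have : (N:ℝ) • v = 0 := by rw [← hBty, hy0, Matrix.mulVec_zero]
    have : v = 0 := by
      have := congrArg (fun w => (N:ℝ)⁻¹ • w) this
      simpa [smul_smul, inv_mul_cancel₀ hNR.ne'] using this
    exact hv this
  have hSdet : IsUnit S.det := by
    have h : IsUnit (S.det * S.det) := by rw [← Matrix.det_mul, hS2]; exact hDTDdet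
    exact isUnit_of_mul_isUnit_left h
  -- intertwining: T * B = B * S
  have hTB : T * B = B * S := by
    have hTTB : (T * T) * B = B * (S * S) := by
      have hAAB : A*Aᵀ = (N:ℝ)•1 - B*Bᵀ := by rw [← eq1]; abel
      rw [hT2, hS2, eqDTD, hAAB, Matrix.sub_mul, Matrix.mul_sub, Matrix.smul_mul,
        Matrix.mul_smul, Matrix.one_mul, Matrix.mul_one, Matrix.mul_assoc]
    have hX : T * (T*B - B*S) = -((T*B - B*S) * S) := by
      have h0 : T * (T*B - B*S) + (T*B - B*S) * S = (T*T)*B - B*(S*S) := by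
        rw [Matrix.mul_sub, Matrix.sub_mul, ← Matrix.mul_assoc T T B,
          ← Matrix.mul_assoc T B S, Matrix.mul_assoc B S S]
        abel
      have h1 : T * (T*B - B*S) + (T*B - B*S) * S = 0 := by rw [h0, hTTB, sub_self]
      exact eq_neg_of_add_eq_zero_left h1
    have := Stmt12Aux.sylvester hTpsd hSpsd hTdet hX
    exact sub_eq_zero.mp this
  -- shifted matrices invertible
  obtain ⟨M, hM⟩ : ∃ M', M' = S + Real.sqrt N • 1 := ⟨_, rfl⟩
  obtain ⟨TN, hTN⟩ : ∃ M', M' = T + Real.sqrt N • 1 := ⟨_, rfl⟩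
  have hMdet : IsUnit M.det := by
    rw [hM]; exact Stmt12Aux.isUnit_det_add_smul_one hSpsd hsN
  have hTNdet : IsUnit TN.det := by
    rw [hTN]; exact Stmt12Aux.isUnit_det_add_smul_one hTpsd hsN
  obtain ⟨E, hE⟩ : ∃ E', E' = D - Real.sqrt N • PD := ⟨_, rfl⟩
  have hPDS : PD * S = D := hPDpol.symm
  have hEM : E * M = -(PD * (Bᵀ*B)) := by
    rw [hE, hM]
    calc (D - Real.sqrt N • PD) * (S + Real.sqrt N • 1)
        = D*S + Real.sqrt N • D - Real.sqrt N • (PD*S)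
          - (Real.sqrt N * Real.sqrt N) • PD := by
          simp only [Matrix.sub_mul, Matrix.mul_add, Matrix.smul_mul, Matrix.mul_smul,
            Matrix.mul_one, smul_smul, smul_sub, smul_add]
          module
      _ = D*S - (N:ℝ)•PD := by rw [hPDS, hsNsq]; abel
      _ = PD*(S*S) - (N:ℝ)•PD := by rw [← Matrix.mul_assoc, hPDS]
      _ = PD*((N:ℝ)•1 - Bᵀ*B) - (N:ℝ)•PD := by rw [hS2, eqDTD]
      _ = -(PD*(Bᵀ*B)) := by
          rw [Matrix.mul_sub, Matrix.mul_smul, Matrix.mul_one]; abel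
  have hPDinv : PD = D * S⁻¹ := by
    rw [hPDpol, Matrix.mul_assoc, Matrix.mul_nonsing_inv _ hSdet, Matrix.mul_one]
  have hSBt : S⁻¹ * Bᵀ = Bᵀ * T⁻¹ := by
    have h1 : Bᵀ * T = S * Bᵀ := by
      have h := congrArg Matrix.transpose hTB
      rw [Matrix.transpose_mul, Matrix.transpose_mul, hTt, hSt] at h
      exact h
    calc S⁻¹ * Bᵀ = S⁻¹ * ((Bᵀ * T) * T⁻¹) := by
          rw [Matrix.mul_nonsing_inv_cancel_right _ _ hTdet]
      _ = S⁻¹ * (S * (Bᵀ * T⁻¹)) := by rw [h1, Matrix.mul_assoc]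
      _ = Bᵀ * T⁻¹ := by rw [← Matrix.mul_assoc, Matrix.nonsing_inv_mul _ hSdet, Matrix.one_mul]
  have hPDBt : PD * Bᵀ = -(C*Aᵀ) * T⁻¹ := by
    rw [hPDinv, Matrix.mul_assoc, hSBt, ← Matrix.mul_assoc, eqDBT]
  have hEM2 : E * M = (C * Aᵀ) * (T⁻¹ * B) := by
    rw [hEM, show PD * (Bᵀ*B) = (PD*Bᵀ)*B from by rw [Matrix.mul_assoc], hPDBt]
    rw [Matrix.neg_mul, Matrix.neg_mul, neg_neg, Matrix.mul_assoc]
  have hBM : B * M = TN * B := by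
    rw [hM, hTN, Matrix.mul_add, Matrix.add_mul, hTB, Matrix.mul_smul, Matrix.smul_mul,
      Matrix.mul_one, Matrix.one_mul]
  have hBMinv : B * M⁻¹ = TN⁻¹ * B := by
    calc B * M⁻¹ = TN⁻¹ * (TN * (B * M⁻¹)) := by
          rw [← Matrix.mul_assoc, Matrix.nonsing_inv_mul _ hTNdet, Matrix.one_mul]
      _ = TN⁻¹ * ((TN * B) * M⁻¹) := by rw [Matrix.mul_assoc]
      _ = TN⁻¹ * ((B * M) * M⁻¹) := by rw [hBM]
      _ = TN⁻¹ * B := by rw [Matrix.mul_nonsing_inv_cancel_right _ _ hMdet]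
  obtain ⟨W, hW⟩ : ∃ W', W' = (Aᵀ * T⁻¹) * TN⁻¹ := ⟨_, rfl⟩
  have hEf : E = C * (W * B) := by
    calc E = (E * M) * M⁻¹ := by rw [Matrix.mul_nonsing_inv_cancel_right _ _ hMdet]
      _ = ((C * Aᵀ) * (T⁻¹ * B)) * M⁻¹ := by rw [hEM2]
      _ = (C * Aᵀ) * (T⁻¹ * (B * M⁻¹)) := by
          simp only [Matrix.mul_assoc]
      _ = (C * Aᵀ) * (T⁻¹ * (TN⁻¹ * B)) := by rw [hBMinv]
      _ = C * (W * B) := by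
          rw [hW]
          simp only [Matrix.mul_assoc]
  have hQ : (Aᵀ * T⁻¹)ᵀ * (Aᵀ * T⁻¹) = 1 := by
    rw [Matrix.transpose_mul, Matrix.transpose_transpose, Matrix.transpose_nonsing_inv, hTt]
    calc T⁻¹ * A * (Aᵀ * T⁻¹) = T⁻¹ * ((A * Aᵀ) * T⁻¹) := by
          rw [Matrix.mul_assoc, Matrix.mul_assoc]
      _ = T⁻¹ * ((T * T) * T⁻¹) := by rw [hT2]
      _ = T⁻¹ * T := by rw [Matrix.mul_nonsing_inv_cancel_right _ _ hTdet]
      _ = 1 := Matrix.nonsing_inv_mul _ hTdet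
  -- entrywise bound
  have hmain : ∀ i j, |E i j| ≤ (r:ℝ) / Real.sqrt N := by
    intro i j
    obtain ⟨b, hb⟩ : ∃ b', b' = (fun k => B k j) := ⟨_, rfl⟩
    have hEij : E i j = ∑ k, C i k * (W *ᵥ b) k := by
      rw [hEf, Matrix.mul_apply]
      refine Finset.sum_congr rfl fun k _ => ?_
      congr 1
      rw [Matrix.mul_apply, Matrix.mulVec, hb]
      rfl
    have hCsq : ∑ k, (C i k)^2 = (r:ℝ) := by
      have h1 : ∀ k, (C i k)^2 = 1 := by
        intro k
        have := hsign (Sum.inr i) (Sum.inl k)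
        rw [hHdef, Matrix.fromBlocks_apply₂₁] at this
        rcases this with h | h <;> rw [h] <;> norm_num
      simp [h1]
    have hbsq : ∑ k, (b k)^2 = (r:ℝ) := by
      have h1 : ∀ k, (b k)^2 = 1 := by
        intro k
        have := hsign (Sum.inl k) (Sum.inr j)
        rw [hHdef, Matrix.fromBlocks_apply₁₂] at this
        have hbk : b k = B k j := by rw [hb]
        rcases this with h | h <;> rw [hbk, h] <;> norm_num
      simp [h1]
    obtain ⟨z, hz⟩ : ∃ z', z' = TN⁻¹ *ᵥ b := ⟨_, rfl⟩
    have hWb : W *ᵥ b = (Aᵀ * T⁻¹) *ᵥ z := by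
      rw [hW, hz, Matrix.mulVec_mulVec]
    have hQz : ((Aᵀ * T⁻¹) *ᵥ z) ⬝ᵥ ((Aᵀ * T⁻¹) *ᵥ z) = z ⬝ᵥ z := by
      calc ((Aᵀ * T⁻¹) *ᵥ z) ⬝ᵥ ((Aᵀ * T⁻¹) *ᵥ z)
          = (((Aᵀ * T⁻¹) *ᵥ z) ᵥ* (Aᵀ * T⁻¹)) ⬝ᵥ z := Matrix.dotProduct_mulVec _ _ _
        _ = ((Aᵀ * T⁻¹)ᵀ *ᵥ ((Aᵀ * T⁻¹) *ᵥ z)) ⬝ᵥ z := by rw [← Matrix.mulVec_transpose]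
        _ = (((Aᵀ * T⁻¹)ᵀ * (Aᵀ * T⁻¹)) *ᵥ z) ⬝ᵥ z := by rw [Matrix.mulVec_mulVec]
        _ = z ⬝ᵥ z := by rw [hQ, Matrix.one_mulVec]
    have hz0 : 0 ≤ z ⬝ᵥ z := Finset.sum_nonneg fun k _ => mul_self_nonneg _
    have hzz : z ⬝ᵥ z ≤ (r:ℝ) / N := by
      have hbz : b = TN *ᵥ z := by
        rw [hz, Matrix.mulVec_mulVec, Matrix.mul_nonsing_inv _ hTNdet, Matrix.one_mulVec]
      have hzb : z ⬝ᵥ b = z ⬝ᵥ (T *ᵥ z) + Real.sqrt N * (z ⬝ᵥ z) := by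
        rw [hbz, hTN, Matrix.add_mulVec, dotProduct_add, Matrix.smul_mulVec,
          Matrix.one_mulVec, dotProduct_smul, smul_eq_mul]
      have hTz : 0 ≤ z ⬝ᵥ (T *ᵥ z) := by have := hTpsd.dotProduct_mulVec_nonneg z; simpa using this
      have hCS2 : (z ⬝ᵥ b)^2 ≤ (z ⬝ᵥ z) * (b ⬝ᵥ b) := by
        have h := Finset.sum_mul_sq_le_sq_mul_sq Finset.univ z b
        have e1 : ∑ k, z k ^2 = z ⬝ᵥ z := by simp [dotProduct, sq]
        have e2 : ∑ k, b k ^2 = b ⬝ᵥ b := by simp [dotProduct, sq]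
        have e3 : ∑ k, z k * b k = z ⬝ᵥ b := by simp [dotProduct]
        rw [e1, e2, e3] at h
        exact h
      have hbb : b ⬝ᵥ b = (r:ℝ) := by
        rw [dotProduct]
        simpa [sq] using hbsq
      have hlow : Real.sqrt N * (z ⬝ᵥ z) ≤ z ⬝ᵥ b := by rw [hzb]; linarith
      rcases eq_or_lt_of_le hz0 with h0 | h0
      · rw [← h0]; positivity
      · have h1 : (Real.sqrt N * (z ⬝ᵥ z))^2 ≤ (z ⬝ᵥ b)^2 := by
          have hznn : 0 ≤ Real.sqrt N * (z ⬝ᵥ z) := by positivity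
          exact pow_le_pow_left₀ hznn hlow 2
        have h2 : (N:ℝ) * (z ⬝ᵥ z)^2 ≤ (z ⬝ᵥ z) * (r:ℝ) := by
          calc (N:ℝ) * (z ⬝ᵥ z)^2 = (Real.sqrt N * (z ⬝ᵥ z))^2 := by
                rw [mul_pow, Real.sq_sqrt hNR.le]
            _ ≤ (z ⬝ᵥ b)^2 := h1
            _ ≤ (z ⬝ᵥ z) * (b ⬝ᵥ b) := hCS2
            _ = (z ⬝ᵥ z) * (r:ℝ) := by rw [hbb]
        rw [le_div_iff₀ hNR]
        nlinarith [h2, h0]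
    have hsum2 : ∑ k, ((W *ᵥ b) k)^2 ≤ (r:ℝ) / N := by
      have : ∑ k, ((W *ᵥ b) k)^2 = (W *ᵥ b) ⬝ᵥ (W *ᵥ b) := by
        rw [dotProduct]; simp [sq]
      rw [this, hWb, hQz]
      exact hzz
    have hCS : (E i j)^2 ≤ (r:ℝ) * ((r:ℝ)/N) := by
      rw [hEij]
      calc (∑ k, C i k * (W *ᵥ b) k)^2
          ≤ (∑ k, (C i k)^2) * (∑ k, ((W *ᵥ b) k)^2) :=
            Finset.sum_mul_sq_le_sq_mul_sq Finset.univ _ _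
        _ ≤ (r:ℝ) * ((r:ℝ)/N) := by
            rw [hCsq]
            exact mul_le_mul_of_nonneg_left hsum2 (Nat.cast_nonneg r)
    have habs : |E i j| = Real.sqrt ((E i j)^2) := (Real.sqrt_sq_eq_abs _).symm
    rw [habs]
    have h3 : Real.sqrt ((E i j)^2) ≤ Real.sqrt ((r:ℝ) * ((r:ℝ)/N)) :=
      Real.sqrt_le_sqrt hCS
    refine h3.trans (le_of_eq ?_)
    rw [show (r:ℝ) * ((r:ℝ)/N) = ((r:ℝ)/Real.sqrt N)^2 from by
      rw [div_pow, sq, sq, hsNsq]; ring]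
    exact Real.sqrt_sq (by positivity)
  -- numeric comparison
  have hNr2 : (0:ℝ) < (N:ℝ) - (r:ℝ)^2 := by
    have : ((r:ℝ))^2 < (N:ℝ) := by exact_mod_cast hrN
    linarith
  have hstep : (r:ℝ) / Real.sqrt N ≤ (r:ℝ)^2 * (1 + Real.sqrt N) / ((N:ℝ) - (r:ℝ)^2) := by
    rcases Nat.eq_zero_or_pos r with h0 | h1
    · subst h0; simp
    · have hr1 : (1:ℝ) ≤ (r:ℝ) := by exact_mod_cast h1
      rw [div_le_div_iff₀ hsN hNr2]
      calc (r:ℝ)*((N:ℝ)-(r:ℝ)^2) ≤ (r:ℝ)*(N:ℝ) := by nlinarith [sq_nonneg (r:ℝ), hr1]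
        _ ≤ (r:ℝ)^2*(N:ℝ) := by
            have hrr : (r:ℝ) ≤ (r:ℝ)^2 := by nlinarith [hr1]
            exact mul_le_mul_of_nonneg_right hrr hNR.le
        _ ≤ (r:ℝ)^2*(1+Real.sqrt N)*Real.sqrt N := by
            nlinarith [hsNsq, mul_nonneg (sq_nonneg (r:ℝ)) (Real.sqrt_nonneg (N:ℝ))]
  have hR0 : 0 ≤ (r:ℝ)^2 * (1 + Real.sqrt N) / ((N:ℝ) - (r:ℝ)^2) := by
    apply div_nonneg _ hNr2.le
    positivity
  rw [Matrix.norm_le_iff hR0]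
  intro i j
  rw [Real.norm_eq_abs, ← hE]
  exact (hmain i j).trans hstep
end
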